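/- Let n ≥ 5 be odd with n ≡ 5 or 7 (mod 8) (equivalently n+1 ≡ 0 or 6 (mod 8)). Then the configuration consisting of the n vertices of a regular n-gon together with its barycenter is monochromatic under the Orchard relation. If instead n ≡ 1 or 3 (mod 8), the Orchard partition is (n,1): all vertices form one class and the barycenter forms the other. -/

import Mathlib

open scoped Classical

noncomputable section

/-- Orientation determinant of two vectors in the plane. -/
def det2 (u v : ℝ × ℝ) : ℝ := u.1 * v.2 - u.2 * v.1

/-- The line through `A` and `B` separates the points `P` and `Q`
(they lie in distinct open half-planes determined by the line). -/
def SepLine (A B P Q : ℝ × ℝ) : Prop :=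
  det2 (B - A) (P - A) * det2 (B - A) (Q - A) < 0

/-- A finite planar point set is a generic configuration if no three of its
points are collinear. -/
def Generic (C : Finset (ℝ × ℝ)) : Prop :=
  ∀ a ∈ C, ∀ b ∈ C, ∀ c ∈ C, a ≠ b → a ≠ c → b ≠ c →
    ¬ Collinear ℝ ({a, b, c} : Set (ℝ × ℝ))

/-- `nsep C P Q` is the number of lines spanned by (unordered) pairs of points of
`C \ {P,Q}` that separate `P` from `Q`. -/
def nsep (C : Finset (ℝ × ℝ)) (P Q : ℝ × ℝ) : ℕ :=
  (((C \ {P, Q}).powersetCard 2).filter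
    (fun s => ∃ A ∈ s, ∃ B ∈ s, A ≠ B ∧ SepLine A B P Q)).card

/-- The Orchard relation: `P ∼ Q` iff `n(P,Q) ≡ n - 3 (mod 2)` where `n = |C|`. -/
def Orchard (C : Finset (ℝ × ℝ)) (P Q : ℝ × ℝ) : Prop :=
  (nsep C P Q : ℤ) ≡ (C.card : ℤ) - 3 [ZMOD 2]

/-- A configuration is monochromatic if all its points are Orchard-equivalent. -/
def Mono (C : Finset (ℝ × ℝ)) : Prop :=
  ∀ P ∈ C, ∀ Q ∈ C, P ≠ Q → Orchard C P Q

/-- A configuration is in convex position if each of its points is a vertex of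
the convex hull. -/
def ConvexPos (C : Finset (ℝ × ℝ)) : Prop :=
  ∀ P ∈ C, P ∉ convexHull ℝ ((C : Set (ℝ × ℝ)) \ {P})

/-- The `k`-th vertex of the regular `n`-gon inscribed in the unit circle
centered at the origin. -/
def vtx (n : ℕ) (k : Fin n) : ℝ × ℝ :=
  (Real.cos (2 * Real.pi * k / n), Real.sin (2 * Real.pi * k / n))

/-- The configuration consisting of the vertices of the regular `n`-gon together
with its barycenter (the origin). -/
def ngonWithCenter (n : ℕ) : Finset (ℝ × ℝ) :=
  insert ((0, 0) : ℝ × ℝ) (Finset.image (vtx n) Finset.univ)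

set_option linter.unusedSectionVars false
set_option linter.unusedVariables false


open Real

/-- parity of a finset closed under a (global) involution g equals parity of fixed points. -/
theorem card_modEq_filter_fixed {α : Type*} [DecidableEq α] (g : α → α)
    (hg : ∀ x, g (g x) = x) :
    ∀ (F : Finset α), (∀ x ∈ F, g x ∈ F) →
      F.card % 2 = (F.filter fun x => g x = x).card % 2 := by
  intro F
  induction F using Finset.strongInduction with
  | _ F ih =>
    intro hcl
    by_cases hex : ∃ x ∈ F, g x ≠ x
    · obtain ⟨x, hx, hgx⟩ := hex
      set F' := F \ {x, g x} with hF'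
      have hsub : F' ⊂ F := by
        apply Finset.sdiff_ssubset ?_ (by simp)
        intro y hy
        simp at hy
        rcases hy with rfl | rfl
        · exact hx
        · exact hcl x hx
      have hcl' : ∀ y ∈ F', g y ∈ F' := by
        intro y hy
        simp only [hF', Finset.mem_sdiff, Finset.mem_insert, Finset.mem_singleton] at hy ⊢
        refine ⟨hcl y hy.1, ?_⟩
        push_neg at hy ⊢
        refine ⟨?_, ?_⟩
        · intro h; exact hy.2.2 (by rw [← h, hg])
        · intro h; apply hy.2.1; have := congrArg g h; rwa [hg, hg] at this
      have hcard : F.card = F'.card + 2 := by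
        have hxm : x ∈ F := hx
        have hgxm : g x ∈ F := hcl x hx
        have : ({x, g x} : Finset α) ⊆ F := by
          intro y hy; simp at hy; rcases hy with rfl | rfl <;> assumption
        have h2 : ({x, g x} : Finset α).card = 2 := by
          rw [Finset.card_insert_of_notMem (by simpa using (Ne.symm hgx)), Finset.card_singleton]
        have hle := Finset.card_le_card this
        rw [hF', Finset.card_sdiff_of_subset this, h2]
        rw [h2] at hle
        omega
      have hfil : F.filter (fun y => g y = y) = F'.filter (fun y => g y = y) := by
        ext y
        simp only [Finset.mem_filter, hF', Finset.mem_sdiff, Finset.mem_insert,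
          Finset.mem_singleton]
        constructor
        · rintro ⟨hyF, hfix⟩
          refine ⟨⟨hyF, ?_⟩, hfix⟩
          push_neg
          constructor
          · rintro rfl; exact hgx hfix
          · rintro rfl; apply hgx; rw [← hfix, hg]
        · rintro ⟨⟨h1, _⟩, h2⟩; exact ⟨h1, h2⟩
      rw [hcard, hfil, ← ih F' hsub hcl']
      omega
    · push_neg at hex
      congr 1
      rw [Finset.filter_true_of_mem hex]


open Real

noncomputable section

def pt (θ : ℝ) : ℝ × ℝ := (Real.cos θ, Real.sin θ)

lemma det2_pt (α β γ : ℝ) :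
    det2 (pt β - pt α) (pt γ - pt α) = sin (γ - β) + sin (β - α) + sin (α - γ) := by
  simp only [det2, pt, Prod.fst_sub, Prod.snd_sub, Real.sin_sub, Real.cos_sub]
  ring

lemma det2_pt_zero (α β : ℝ) :
    det2 (pt β - pt α) ((0, 0) - pt α) = sin (β - α) := by
  simp only [det2, pt, Prod.fst_sub, Prod.snd_sub, Real.sin_sub]
  ring

lemma sin_tri (x y : ℝ) :
    sin (2 * y) + sin (2 * x) - sin (2 * x + 2 * y)
      = 4 * sin x * sin y * sin (x + y) := by
  have hx := Real.sin_sq_add_cos_sq x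
  have hy := Real.sin_sq_add_cos_sq y
  rw [show (2*x+2*y : ℝ) = 2*x + 2*y from rfl, Real.sin_add (2*x) (2*y), Real.sin_add,
    Real.sin_two_mul, Real.sin_two_mul, Real.cos_two_mul, Real.cos_two_mul]
  linear_combination (-4*Real.sin y*Real.cos y)*hx + (-4*Real.sin x*Real.cos x)*hy

lemma det2_pt' (α β γ : ℝ) :
    det2 (pt β - pt α) (pt γ - pt α)
      = 4 * sin ((β - α)/2) * sin ((γ - β)/2) * sin ((γ - α)/2) := by
  rw [det2_pt]
  have := sin_tri ((β - α)/2) ((γ - β)/2)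
  have e1 : 2 * ((β - α)/2) = β - α := by ring
  have e2 : 2 * ((γ - β)/2) = γ - β := by ring
  have e3 : 2 * ((β - α)/2) + 2 * ((γ - β)/2) = γ - α := by ring
  have e4 : (β - α)/2 + (γ - β)/2 = (γ - α)/2 := by ring
  rw [e1, e2, show (β - α + (γ - β) : ℝ) = γ - α by ring, e4] at this
  have h2 : sin (α - γ) = - sin (γ - α) := by
    rw [show α - γ = -(γ - α) by ring, Real.sin_neg]
  rw [h2]
  linarith [this]

end
noncomputable section

variable {n : ℕ}

def S (n : ℕ) (t : ℤ) : ℝ := Real.sin (π * t / n)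

lemma pt_periodic (θ : ℝ) (m : ℤ) : pt (θ + m * (2 * π)) = pt θ := by
  simp [pt, Real.cos_add_int_mul_two_pi, Real.sin_add_int_mul_two_pi]

lemma pt_ang_congr (hn : 0 < n) {z z' : ℤ} (h : z % n = z' % n) :
    pt (2 * π * z / n) = pt (2 * π * z' / n) := by
  obtain ⟨m, hm⟩ : (n:ℤ) ∣ (z - z') := Int.dvd_of_emod_eq_zero (by rw [Int.sub_emod, h]; simp)
  have : (2 * π * z / n : ℝ) = 2 * π * z' / n + m * (2 * π) := by
    have hz : (z : ℝ) = z' + n * m := by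
      have : (z : ℤ) = z' + n * m := by linarith [hm]
      exact_mod_cast congrArg (Int.cast : ℤ → ℝ) this
    rw [hz]
    field_simp
  rw [this, pt_periodic]

lemma vtx_eq_pt (k : Fin n) : vtx n k = pt (2 * π * (k : ℕ) / n) := rfl

lemma vtx_eq_pt' (hn : 0 < n) (k : Fin n) {z : ℤ} (h : (k : ℤ) % n = z % n) :
    vtx n k = pt (2 * π * z / n) := by
  rw [vtx_eq_pt, show ((k : ℕ) : ℝ) = ((k : ℤ) : ℝ) by push_cast; ring]
  exact pt_ang_congr hn h

lemma S_ne_zero (hn : 0 < n) {t : ℤ} (h : ¬ (n:ℤ) ∣ t) : S n t ≠ 0 := by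
  intro h0
  rw [S, Real.sin_eq_zero_iff] at h0
  obtain ⟨m, hm⟩ := h0
  apply h
  refine ⟨m, ?_⟩
  have hπ : (π : ℝ) ≠ 0 := Real.pi_ne_zero
  have hnR : (n : ℝ) ≠ 0 := Nat.cast_ne_zero.mpr hn.ne'
  have : (m : ℝ) * n = t := by
    field_simp at hm
    have := hm
    linarith [this]
  exact_mod_cast (by linarith [this] : (t:ℝ) = (n:ℝ) * m)

lemma S_neg (t : ℤ) : S n (-t) = - S n t := by
  simp [S, Real.sin_neg, neg_div, mul_neg]

lemma S_add_int_mul (hn : 0 < n) (t e : ℤ) : S n (t + n * e) = (-1)^e * S n t := by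
  have hnR : (n : ℝ) ≠ 0 := Nat.cast_ne_zero.mpr hn.ne'
  have h2 : (π * ((t + n * e : ℤ) : ℝ) / n : ℝ) = π * t / n + e * π := by
    push_cast
    field_simp
  rw [S, S, h2, Real.sin_add_int_mul_pi]

lemma S_two_mul (t : ℤ) : S n (2 * t) = 2 * S n t * Real.cos (π * t / n) := by
  have h2 : (π * ((2 * t : ℤ) : ℝ) / n : ℝ) = 2 * (π * t / n) := by push_cast; ring
  rw [S, h2, Real.sin_two_mul, S]

lemma det2_ptz (g h i : ℤ) (hn : 0 < n) :
    det2 (pt (2*π*h/n) - pt (2*π*g/n)) (pt (2*π*i/n) - pt (2*π*g/n))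
      = 4 * S n (h - g) * S n (i - h) * S n (i - g) := by
  have hnR : (n : ℝ) ≠ 0 := Nat.cast_ne_zero.mpr hn.ne'
  rw [det2_pt']
  have e1 : ((2*π*h/n - 2*π*g/n)/2 : ℝ) = π * ((h : ℝ) - g) / n := by field_simp
  have e2 : ((2*π*i/n - 2*π*h/n)/2 : ℝ) = π * ((i : ℝ) - h) / n := by field_simp
  have e3 : ((2*π*i/n - 2*π*g/n)/2 : ℝ) = π * ((i : ℝ) - g) / n := by field_simp
  rw [e1, e2, e3]
  simp only [S]
  push_cast
  ring

lemma det2_ptz_zero (g h : ℤ) (hn : 0 < n) :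
    det2 (pt (2*π*h/n) - pt (2*π*g/n)) ((0,0) - pt (2*π*g/n)) = S n (2*(h - g)) := by
  rw [det2_pt_zero]
  have : (2*π*h/n - 2*π*g/n : ℝ) = π * ((2*(h - g) : ℤ) : ℝ) / n := by
    have hnR : (n : ℝ) ≠ 0 := Nat.cast_ne_zero.mpr hn.ne'
    push_cast; field_simp
  rw [this, S]

end
noncomputable section
namespace NG

def Rfl (c : ℝ) (p : ℝ × ℝ) : ℝ × ℝ :=
  (Real.cos c * p.1 + Real.sin c * p.2, Real.sin c * p.1 - Real.cos c * p.2)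

lemma Rfl_pt (c θ : ℝ) : Rfl c (pt θ) = pt (c - θ) := by
  simp [Rfl, pt, Real.cos_sub, Real.sin_sub, Prod.mk.injEq, mul_comm]

lemma Rfl_invol (c : ℝ) : Function.Involutive (Rfl c) := by
  intro p
  have h := Real.sin_sq_add_cos_sq c
  apply Prod.ext <;> simp only [Rfl]
  · linear_combination p.1 * h
  · linear_combination p.2 * h

lemma Rfl_sub (c : ℝ) (p q : ℝ × ℝ) : Rfl c (p - q) = Rfl c p - Rfl c q := by
  simp only [Rfl, Prod.fst_sub, Prod.snd_sub, Prod.mk_sub_mk, Prod.mk.injEq]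
  constructor <;> ring

lemma Rfl_zero (c : ℝ) : Rfl c (0, 0) = (0, 0) := by simp [Rfl]

lemma det2_Rfl (c : ℝ) (u v : ℝ × ℝ) : det2 (Rfl c u) (Rfl c v) = - det2 u v := by
  have h := Real.sin_sq_add_cos_sq c
  simp only [det2, Rfl]
  linear_combination (-(u.1*v.2 - u.2*v.1)) * h

lemma SepLine_Rfl (c : ℝ) (A B P Q : ℝ × ℝ) :
    SepLine (Rfl c A) (Rfl c B) (Rfl c P) (Rfl c Q) ↔ SepLine A B P Q := by
  unfold SepLine
  rw [← Rfl_sub, ← Rfl_sub, ← Rfl_sub, det2_Rfl, det2_Rfl, neg_mul_neg]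

lemma det2_shift (A B X : ℝ × ℝ) : det2 (A - B) (X - B) = - det2 (B - A) (X - A) := by
  simp only [det2, Prod.fst_sub, Prod.snd_sub]
  ring

lemma SepLine_swapAB {A B P Q : ℝ × ℝ} : SepLine A B P Q ↔ SepLine B A P Q := by
  unfold SepLine
  rw [det2_shift A B P, det2_shift A B Q, neg_mul_neg]

lemma SepLine_swapPQ {A B P Q : ℝ × ℝ} : SepLine A B P Q ↔ SepLine A B Q P := by
  unfold SepLine
  rw [mul_comm]

end NG
end

noncomputable section
namespace NG
open Real Finset

variable {n : ℕ} [NeZero n]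

lemma npos : 0 < n := Nat.pos_of_ne_zero (NeZero.ne n)

def finOf (n : ℕ) [NeZero n] (z : ℤ) : Fin n :=
  ⟨(z % n).toNat, by
    have h1 : 0 ≤ z % n := Int.emod_nonneg z (by exact_mod_cast (NeZero.ne n))
    have h2 : z % n < n := Int.emod_lt_of_pos z (by exact_mod_cast npos)
    omega⟩

lemma finOf_coe (z : ℤ) : ((finOf n z : Fin n) : ℤ) = z % n := by
  simp only [finOf]
  have h1 : 0 ≤ z % n := Int.emod_nonneg z (by exact_mod_cast (NeZero.ne n))
  omega

lemma finOf_congr {z1 z2 : ℤ} (h : z1 % n = z2 % n) : finOf n z1 = finOf n z2 := by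
  apply Fin.ext
  simp only [finOf]
  omega

lemma finOf_coe_self (k : Fin n) : finOf n (k : ℤ) = k := by
  apply Fin.ext
  simp only [finOf]
  have : ((k : ℤ)) % n = (k : ℤ) := Int.emod_eq_of_lt (by exact_mod_cast Nat.zero_le _)
    (by exact_mod_cast k.isLt)
  omega

lemma vtx_pt (k : Fin n) : vtx n k = pt (2 * π * ((k : ℤ) : ℝ) / n) := by
  rw [vtx_eq_pt]
  norm_num

lemma vtx_finOf_pt (z : ℤ) : vtx n (finOf n z) = pt (2 * π * (z : ℝ) / n) := by
  refine vtx_eq_pt' npos _ ?_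
  rw [finOf_coe]
  exact Int.emod_emod_of_dvd z dvd_rfl

lemma Rfl_vtx (w : ℤ) (k : Fin n) :
    Rfl (2 * π * (w : ℝ) / n) (vtx n k) = vtx n (finOf n (w - (k : ℤ))) := by
  rw [vtx_pt, Rfl_pt, vtx_finOf_pt]
  congr 1
  have hnR : (n : ℝ) ≠ 0 := Nat.cast_ne_zero.mpr (NeZero.ne n)
  push_cast
  field_simp

lemma vtx_ne_zero (k : Fin n) : vtx n k ≠ (0, 0) := by
  intro h
  have h1 := congrArg Prod.fst h
  have h2 := congrArg Prod.snd h
  simp only [vtx] at h1 h2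
  have := Real.sin_sq_add_cos_sq (2 * π * (k : ℕ) / n)
  rw [h1, h2] at this
  norm_num at this

lemma vtx_inj : Function.Injective (vtx n) := by
  intro j k h
  rw [vtx_pt, vtx_pt] at h
  have hc1 : Real.cos (2 * π * ((j:ℤ):ℝ)/n) = Real.cos (2 * π * ((k:ℤ):ℝ)/n) :=
    congrArg Prod.fst h
  have hc2 : Real.sin (2 * π * ((j:ℤ):ℝ)/n) = Real.sin (2 * π * ((k:ℤ):ℝ)/n) :=
    congrArg Prod.snd h
  set x := (2 * π * ((j:ℤ):ℝ)/n) with hx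
  set y := (2 * π * ((k:ℤ):ℝ)/n) with hy
  have hcos : Real.cos (x - y) = 1 := by
    rw [Real.cos_sub, hc1, hc2]
    exact Real.sin_sq_add_cos_sq y ▸ by nlinarith [Real.sin_sq_add_cos_sq y]
  obtain ⟨m, hm⟩ := (Real.cos_eq_one_iff _).1 hcos
  have hnR : (n : ℝ) ≠ 0 := Nat.cast_ne_zero.mpr (NeZero.ne n)
  have h2π : ((2:ℝ) * π) ≠ 0 := (by positivity : (0:ℝ) < 2 * π).ne'
  have hm' : (m : ℝ) * n * (2 * π) = (((j:ℤ):ℝ) - ((k:ℤ):ℝ)) * (2 * π) := by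
    rw [hx, hy] at hm
    field_simp at hm
    linear_combination (2 * π) * hm
  have hreal : (m : ℝ) * n = ((j:ℤ):ℝ) - ((k:ℤ):ℝ) := mul_right_cancel₀ h2π hm'
  have hint : (m : ℤ) * n = (j : ℤ) - (k : ℤ) := by exact_mod_cast hreal
  have habs : m.natAbs * n = ((j:ℤ) - (k:ℤ)).natAbs := by
    have := congrArg Int.natAbs hint
    simpa [Int.natAbs_mul] using this
  have hj := j.isLt
  have hk := k.isLt
  have hlt : ((j:ℤ) - (k:ℤ)).natAbs < n := by omega
  have hm0 : m.natAbs = 0 := by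
    rcases Nat.eq_zero_or_pos m.natAbs with h0 | h0
    · exact h0
    · exfalso
      have : n ≤ m.natAbs * n := Nat.le_mul_of_pos_left n h0
      omega
  have : m = 0 := Int.natAbs_eq_zero.mp hm0
  apply Fin.ext
  rw [this] at hint
  omega

lemma mem_ngon {x : ℝ × ℝ} :
    x ∈ ngonWithCenter n ↔ x = (0,0) ∨ ∃ k : Fin n, x = vtx n k := by
  simp only [ngonWithCenter, Finset.mem_insert, Finset.mem_image, Finset.mem_univ, true_and]
  constructor
  · rintro (h | ⟨k, hk⟩)
    · exact Or.inl h
    · exact Or.inr ⟨k, hk.symm⟩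
  · rintro (h | ⟨k, hk⟩)
    · exact Or.inl h
    · exact Or.inr ⟨k, hk.symm⟩

lemma card_ngon : (ngonWithCenter n).card = n + 1 := by
  rw [ngonWithCenter, Finset.card_insert_of_notMem, Finset.card_image_of_injective _ vtx_inj,
    Finset.card_univ, Fintype.card_fin]
  intro h
  obtain ⟨k, _, hk⟩ := Finset.mem_image.1 h
  exact vtx_ne_zero k hk

end NG
end

noncomputable section
namespace NG
open Real Finset
open scoped Classical

variable {n : ℕ} [NeZero n]

lemma pred_pair {P Q x y : ℝ × ℝ} (hxy : x ≠ y) :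
    (∃ A ∈ ({x, y} : Finset (ℝ × ℝ)), ∃ B ∈ ({x, y} : Finset (ℝ × ℝ)),
      A ≠ B ∧ SepLine A B P Q) ↔ SepLine x y P Q := by
  constructor
  · rintro ⟨A, hA, B, hB, hAB, hsep⟩
    simp only [Finset.mem_insert, Finset.mem_singleton] at hA hB
    rcases hA with rfl | rfl <;> rcases hB with rfl | rfl
    · exact absurd rfl hAB
    · exact hsep
    · exact SepLine_swapAB.mp hsep
    · exact absurd rfl hAB
  · intro h
    exact ⟨x, by simp, y, by simp, hxy, h⟩

lemma nsep_comm (C : Finset (ℝ × ℝ)) (P Q : ℝ × ℝ) : nsep C P Q = nsep C Q P := by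
  unfold nsep
  rw [Finset.pair_comm P Q]
  congr 1
  apply Finset.filter_congr
  intro s _
  constructor <;> rintro ⟨A, hA, B, hB, hAB, h⟩ <;>
    exact ⟨A, hA, B, hB, hAB, SepLine_swapPQ.mp h⟩

/-- Key parity reduction via the reflection involution. -/
lemma nsep_parity (C : Finset (ℝ × ℝ)) (P Q : ℝ × ℝ) (c : ℝ)
    (hC : ∀ x ∈ C \ {P, Q}, Rfl c x ∈ C \ {P, Q})
    (hPQ : (Rfl c P = P ∧ Rfl c Q = Q) ∨ (Rfl c P = Q ∧ Rfl c Q = P)) :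
    nsep C P Q % 2 =
      (((C \ {P, Q}).powersetCard 2).filter
        (fun s => (∃ A ∈ s, ∃ B ∈ s, A ≠ B ∧ SepLine A B P Q) ∧
          s.image (Rfl c) = s)).card % 2 := by
  classical
  set D := C \ {P, Q} with hD
  set F := (D.powersetCard 2).filter
      (fun s => ∃ A ∈ s, ∃ B ∈ s, A ≠ B ∧ SepLine A B P Q) with hF
  have hsepR : ∀ A B : ℝ × ℝ, SepLine (Rfl c A) (Rfl c B) P Q ↔ SepLine A B P Q := by
    intro A B
    rcases hPQ with ⟨h1, h2⟩ | ⟨h1, h2⟩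
    · have h := SepLine_Rfl c A B P Q
      rw [h1, h2] at h
      exact h
    · have h := (SepLine_Rfl c A B Q P).trans SepLine_swapPQ
      rw [h2, h1] at h
      exact h
  have hinv : ∀ s : Finset (ℝ × ℝ), (s.image (Rfl c)).image (Rfl c) = s := by
    intro s
    rw [Finset.image_image]
    have : Rfl c ∘ Rfl c = id := funext (Rfl_invol c)
    rw [this, Finset.image_id]
  have hclosed : ∀ s ∈ F, s.image (Rfl c) ∈ F := by
    intro s hs
    rw [hF, Finset.mem_filter, Finset.mem_powersetCard] at hs ⊢
    obtain ⟨⟨hsub, hcard⟩, A, hA, B, hB, hAB, hsep⟩ := hs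
    refine ⟨⟨?_, ?_⟩, Rfl c A, Finset.mem_image_of_mem _ hA,
      Rfl c B, Finset.mem_image_of_mem _ hB, ?_, (hsepR A B).mpr hsep⟩
    · intro y hy
      obtain ⟨x, hx, rfl⟩ := Finset.mem_image.1 hy
      exact hC x (hsub hx)
    · rw [Finset.card_image_of_injective _ (Rfl_invol c).injective, hcard]
    · exact fun h => hAB ((Rfl_invol c).injective h)
  have := card_modEq_filter_fixed (fun s : Finset (ℝ × ℝ) => s.image (Rfl c)) hinv F hclosed
  rw [nsep]
  rw [show (((C \ {P, Q}).powersetCard 2).filter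
      (fun s => ∃ A ∈ s, ∃ B ∈ s, A ≠ B ∧ SepLine A B P Q)) = F from rfl, this]
  congr 1
  rw [hF, Finset.filter_filter]

end NG
end

noncomputable section
namespace NG
open Real Finset
open scoped Classical

variable {n : ℕ} [NeZero n]

lemma det2_origin (β γ : ℝ) :
    det2 (pt β - ((0:ℝ),(0:ℝ))) (pt γ - ((0:ℝ),(0:ℝ))) = Real.sin (γ - β) := by
  simp only [det2, pt, Prod.fst_sub, Prod.snd_sub, Real.sin_sub]
  ring

lemma det2_origin' (h i : ℤ) (hn : 0 < n) :
    det2 (pt (2*π*(h:ℝ)/n) - ((0:ℝ),(0:ℝ))) (pt (2*π*(i:ℝ)/n) - ((0:ℝ),(0:ℝ)))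
      = S n (2*(i - h)) := by
  rw [det2_origin]
  have hnR : (n : ℝ) ≠ 0 := Nat.cast_ne_zero.mpr hn.ne'
  rw [S]
  congr 1
  push_cast
  field_simp

lemma dvd_sub_emod (x : ℤ) : (n:ℤ) ∣ (x - x % n) := ⟨x / n, by rw [Int.emod_def]; ring⟩

lemma fin_eq_of_dvd {j k : Fin n} (h : (n:ℤ) ∣ ((j:ℤ) - (k:ℤ))) : j = k := by
  have h1 : ((j:ℤ) - (k:ℤ)) = 0 := by
    apply Int.eq_zero_of_abs_lt_dvd h
    have hj := j.isLt
    have hk := k.isLt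
    rw [abs_lt]
    omega
  apply Fin.ext
  omega

lemma odd_dvd_half (hodd : Odd n) {x : ℤ} (h : (n:ℤ) ∣ 2 * x) : (n:ℤ) ∣ x := by
  have hcop : IsCoprime ((n:ℤ)) 2 := by
    rw [Int.isCoprime_iff_gcd_eq_one]
    have h2 : Nat.Coprime n 2 := hodd.coprime_two_right
    simpa [Int.gcd] using h2
  exact hcop.dvd_of_dvd_mul_left h

lemma finOf_eq_of_dvd {z : ℤ} {k : Fin n} (h : (n:ℤ) ∣ (z - (k:ℤ))) : finOf n z = k := by
  have hmod : z % n = (k:ℤ) % n := by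
    have h2 : (n:ℤ) ∣ ((k:ℤ) - z) := by
      obtain ⟨u, hu⟩ := h
      exact ⟨-u, by linarith⟩
    exact Int.modEq_iff_dvd.mpr h2
  rw [finOf_congr hmod, finOf_coe_self]

lemma dvd_of_finOf_eq {z : ℤ} {k : Fin n} (h : finOf n z = k) : (n:ℤ) ∣ (z - (k:ℤ)) := by
  have := finOf_coe (n := n) z
  rw [h] at this
  obtain ⟨u, hu⟩ := dvd_sub_emod (n := n) z
  exact ⟨u, by omega⟩

lemma chord_pair_not_sep (a b k k' : Fin n)
    (hk' : (n:ℤ) ∣ ((k':ℤ) - ((a:ℤ) + (b:ℤ) - (k:ℤ)))) :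
    ¬ SepLine (vtx n k) (vtx n k') (vtx n a) (vtx n b) := by
  have hn : 0 < n := npos
  have hd1 : det2 (vtx n k' - vtx n k) (vtx n a - vtx n k)
      = 4 * S n ((k':ℤ) - (k:ℤ)) * S n ((a:ℤ) - (k':ℤ)) * S n ((a:ℤ) - (k:ℤ)) := by
    rw [vtx_pt, vtx_pt, vtx_pt]
    exact det2_ptz _ _ _ hn
  have hd2 : det2 (vtx n k' - vtx n k) (vtx n b - vtx n k)
      = 4 * S n ((k':ℤ) - (k:ℤ)) * S n ((b:ℤ) - (k':ℤ)) * S n ((b:ℤ) - (k:ℤ)) := by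
    rw [vtx_pt, vtx_pt, vtx_pt]
    exact det2_ptz _ _ _ hn
  obtain ⟨e, he⟩ := hk'
  have h1 : S n ((a:ℤ) - (k':ℤ)) = (-1)^(-e) * S n ((k:ℤ) - (b:ℤ)) := by
    rw [show (a:ℤ) - (k':ℤ) = ((k:ℤ) - (b:ℤ)) + n * (-e) by linarith [he]]
    exact S_add_int_mul hn _ _
  have h2 : S n ((b:ℤ) - (k':ℤ)) = (-1)^(-e) * S n ((k:ℤ) - (a:ℤ)) := by
    rw [show (b:ℤ) - (k':ℤ) = ((k:ℤ) - (a:ℤ)) + n * (-e) by linarith [he]]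
    exact S_add_int_mul hn _ _
  have h3 : S n ((k:ℤ) - (b:ℤ)) = - S n ((b:ℤ) - (k:ℤ)) := by
    rw [show (k:ℤ) - (b:ℤ) = -((b:ℤ) - (k:ℤ)) by ring, S_neg]
  have h4 : S n ((k:ℤ) - (a:ℤ)) = - S n ((a:ℤ) - (k:ℤ)) := by
    rw [show (k:ℤ) - (a:ℤ) = -((a:ℤ) - (k:ℤ)) by ring, S_neg]
  intro hsep
  unfold SepLine at hsep
  rw [hd1, hd2, h1, h2, h3, h4] at hsep
  nlinarith [hsep, sq_nonneg ((-1:ℝ)^(-e) * S n ((k':ℤ) - (k:ℤ)) * S n ((a:ℤ) - (k:ℤ))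
    * S n ((b:ℤ) - (k:ℤ)))]

lemma diam_sep (hodd : Odd n) (a b k0 : Fin n) (hab : a ≠ b)
    (hk0 : (n:ℤ) ∣ (2*(k0:ℤ) - ((a:ℤ) + (b:ℤ)))) :
    SepLine ((0:ℝ),(0:ℝ)) (vtx n k0) (vtx n a) (vtx n b) := by
  have hn : 0 < n := npos
  unfold SepLine
  have hd1 : det2 (vtx n k0 - ((0:ℝ),(0:ℝ))) (vtx n a - ((0:ℝ),(0:ℝ)))
      = S n (2*((a:ℤ) - (k0:ℤ))) := by
    rw [vtx_pt, vtx_pt]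
    exact det2_origin' _ _ hn
  have hd2 : det2 (vtx n k0 - ((0:ℝ),(0:ℝ))) (vtx n b - ((0:ℝ),(0:ℝ)))
      = S n (2*((b:ℤ) - (k0:ℤ))) := by
    rw [vtx_pt, vtx_pt]
    exact det2_origin' _ _ hn
  obtain ⟨f, hf⟩ := hk0
  have h5 : S n (2*((b:ℤ) - (k0:ℤ)))
      = (-1)^(-2*f) * S n (-(2*((a:ℤ) - (k0:ℤ)))) := by
    rw [show 2*((b:ℤ) - (k0:ℤ)) = (-(2*((a:ℤ) - (k0:ℤ)))) + n * (-2*f) by linarith [hf]]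
    exact S_add_int_mul hn _ _
  have h6 : ((-1:ℝ))^(-2*f) = 1 := Even.neg_one_zpow ⟨-f, by ring⟩
  have h7 : S n (-(2*((a:ℤ) - (k0:ℤ)))) = - S n (2*((a:ℤ) - (k0:ℤ))) := S_neg _
  have h8 : S n (2*((a:ℤ) - (k0:ℤ))) ≠ 0 := by
    apply S_ne_zero hn
    intro hdvd
    have h9 : (n:ℤ) ∣ ((a:ℤ) - (k0:ℤ)) := odd_dvd_half hodd hdvd
    obtain ⟨u, hu⟩ := h9
    have h10 : (n:ℤ) ∣ ((a:ℤ) - (b:ℤ)) := ⟨2*u + f, by linarith⟩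
    exact hab (fin_eq_of_dvd h10)
  rw [hd1, hd2, h5, h6, h7]
  nlinarith [mul_self_pos.mpr h8]

end NG
end

noncomputable section
namespace NG
open Real Finset
open scoped Classical

variable {n : ℕ} [NeZero n]

lemma nsepA (hodd : Odd n) {a b : Fin n} (hab : a ≠ b) :
    nsep (ngonWithCenter n) (vtx n a) (vtx n b) % 2 = 1 := by
  have hn : 0 < n := npos
  set w : ℤ := (a:ℤ) + (b:ℤ) with hw
  set c : ℝ := 2*π*(w:ℝ)/n with hc
  set k0 : Fin n := finOf n ((((n+1)/2 : ℕ) : ℤ) * w) with hk0def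
  have hk0 : (n:ℤ) ∣ (2*(k0:ℤ) - w) := by
    obtain ⟨q, hq⟩ := dvd_of_finOf_eq hk0def.symm
    have h2 : (2 : ℤ) * (((n+1)/2 : ℕ) : ℤ) = (n:ℤ) + 1 := by
      obtain ⟨t, ht⟩ := hodd
      push_cast
      omega
    exact ⟨w - 2*q, by linear_combination (-2:ℤ) * hq + w * h2⟩
  have hk0a : k0 ≠ a := by
    intro h
    apply hab
    apply fin_eq_of_dvd
    obtain ⟨u, hu⟩ := hk0
    rw [h] at hu
    exact ⟨u, by linarith [hu]⟩
  have hk0b : k0 ≠ b := by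
    intro h
    apply hab.symm
    apply fin_eq_of_dvd
    obtain ⟨u, hu⟩ := hk0
    rw [h] at hu
    exact ⟨u, by linarith [hu]⟩
  have hRv : ∀ k : Fin n, Rfl c (vtx n k) = vtx n (finOf n (w - (k:ℤ))) :=
    fun k => Rfl_vtx w k
  have hRP : Rfl c (vtx n a) = vtx n b := by
    rw [hRv a]
    congr 1
    exact finOf_eq_of_dvd ⟨0, by rw [hw]; ring⟩
  have hRQ : Rfl c (vtx n b) = vtx n a := by
    rw [hRv b]
    congr 1
    exact finOf_eq_of_dvd ⟨0, by rw [hw]; ring⟩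
  have hRO : Rfl c ((0:ℝ),(0:ℝ)) = ((0:ℝ),(0:ℝ)) := Rfl_zero c
  have hOmem : ((0:ℝ),(0:ℝ)) ∈ ngonWithCenter n := mem_ngon.2 (Or.inl rfl)
  have hVmem : ∀ k : Fin n, vtx n k ∈ ngonWithCenter n :=
    fun k => mem_ngon.2 (Or.inr ⟨k, rfl⟩)
  have hC : ∀ x ∈ ngonWithCenter n \ {vtx n a, vtx n b},
      Rfl c x ∈ ngonWithCenter n \ {vtx n a, vtx n b} := by
    intro x hx
    rw [Finset.mem_sdiff] at hx ⊢
    obtain ⟨hxC, hxPQ⟩ := hx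
    rcases mem_ngon.1 hxC with rfl | ⟨k, rfl⟩
    · rw [hRO]
      exact ⟨hxC, hxPQ⟩
    · rw [hRv k]
      simp only [Finset.mem_insert, Finset.mem_singleton] at hxPQ ⊢
      push_neg at hxPQ ⊢
      refine ⟨hVmem _, ?_, ?_⟩
      · intro h
        apply hxPQ.2
        have hd := dvd_of_finOf_eq (congrArg (finOf n) rfl : finOf n (w - (k:ℤ)) = _)
        have h2 := vtx_inj h
        have hd2 := dvd_of_finOf_eq h2
        congr 1
        apply fin_eq_of_dvd
        obtain ⟨u, hu⟩ := hd2
        exact ⟨-u, by rw [hw] at hu; linarith [hu]⟩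
      · intro h
        apply hxPQ.1
        have h2 := vtx_inj h
        have hd2 := dvd_of_finOf_eq h2
        congr 1
        apply fin_eq_of_dvd
        obtain ⟨u, hu⟩ := hd2
        exact ⟨-u, by rw [hw] at hu; linarith [hu]⟩
  have hpar := nsep_parity (ngonWithCenter n) (vtx n a) (vtx n b) c hC (Or.inr ⟨hRP, hRQ⟩)
  rw [hpar]
  have hOne : ((0:ℝ),(0:ℝ)) ≠ vtx n k0 := fun h => vtx_ne_zero k0 h.symm
  have hfixk0 : Rfl c (vtx n k0) = vtx n k0 := by
    rw [hRv k0]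
    congr 1
    apply finOf_eq_of_dvd
    obtain ⟨u, hu⟩ := hk0
    exact ⟨-u, by linarith [hu]⟩
  have hset : ((((ngonWithCenter n) \ {vtx n a, vtx n b}).powersetCard 2).filter
      (fun s => (∃ A ∈ s, ∃ B ∈ s, A ≠ B ∧ SepLine A B (vtx n a) (vtx n b)) ∧
        s.image (Rfl c) = s))
      = {({((0:ℝ),(0:ℝ)), vtx n k0} : Finset (ℝ × ℝ))} := by
    ext s
    rw [Finset.mem_singleton, Finset.mem_filter, Finset.mem_powersetCard]
    constructor
    · rintro ⟨⟨hsub, hcard⟩, hpred, hfix⟩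
      obtain ⟨x, y, hxy, rfl⟩ := Finset.card_eq_two.1 hcard
      have hsep : SepLine x y (vtx n a) (vtx n b) := (pred_pair hxy).1 hpred
      have hxD := hsub (Finset.mem_insert_self x {y})
      have hyD := hsub (show y ∈ ({x, y} : Finset (ℝ × ℝ)) by simp)
      rw [Finset.mem_sdiff] at hxD hyD
      have hσx : Rfl c x ∈ ({x, y} : Finset (ℝ × ℝ)) := by
        have h := Finset.mem_image_of_mem (Rfl c) (show x ∈ ({x, y} : Finset (ℝ × ℝ)) by simp)
        rwa [hfix] at h
      have hσy : Rfl c y ∈ ({x, y} : Finset (ℝ × ℝ)) := by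
        have h := Finset.mem_image_of_mem (Rfl c) (show y ∈ ({x, y} : Finset (ℝ × ℝ)) by simp)
        rwa [hfix] at h
      by_cases hxx : Rfl c x = x
      · have hyy : Rfl c y = y := by
          simp only [Finset.mem_insert, Finset.mem_singleton] at hσy
          rcases hσy with h | h
          · exfalso
            apply hxy
            have := congrArg (Rfl c) h
            rw [Rfl_invol c, hxx] at this
            exact this.symm
          · exact h
        -- both fixed: classify
        have hclass : ∀ z : ℝ × ℝ, z ∈ ngonWithCenter n → Rfl c z = z →
            z = ((0:ℝ),(0:ℝ)) ∨ z = vtx n k0 := by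
          intro z hzC hzfix
          rcases mem_ngon.1 hzC with rfl | ⟨k, rfl⟩
          · exact Or.inl rfl
          · right
            rw [hRv k] at hzfix
            have h2 := vtx_inj hzfix
            have hd := dvd_of_finOf_eq h2
            congr 1
            apply fin_eq_of_dvd
            have hd2 : (n:ℤ) ∣ (2*(k:ℤ) - w) := by
              obtain ⟨u, hu⟩ := hd
              exact ⟨-u, by linarith [hu]⟩
            have := odd_dvd_half hodd (show (n:ℤ) ∣ 2*((k:ℤ) - (k0:ℤ)) by
              obtain ⟨u, hu⟩ := hd2
              obtain ⟨v, hv⟩ := hk0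
              exact ⟨u - v, by linarith [hu, hv]⟩)
            exact this
        rcases hclass x hxD.1 hxx with rfl | rfl <;>
          rcases hclass y hyD.1 hyy with rfl | rfl
        · exact absurd rfl hxy
        · rfl
        · exact Finset.pair_comm _ _
        · exact absurd rfl hxy
      · exfalso
        have hσxy : Rfl c x = y := by
          simp only [Finset.mem_insert, Finset.mem_singleton] at hσx
          tauto
        rcases mem_ngon.1 hxD.1 with rfl | ⟨k, rfl⟩
        · exact hxx hRO
        · rw [hRv k] at hσxy
          rw [← hσxy] at hsep
          refine chord_pair_not_sep a b k (finOf n (w - (k:ℤ))) ?_ hsep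
          have hd := dvd_of_finOf_eq (rfl : finOf n (w - (k:ℤ)) = _)
          obtain ⟨u, hu⟩ := hd
          exact ⟨-u, by rw [hw] at hu; linarith [hu]⟩
    · rintro rfl
      refine ⟨⟨?_, ?_⟩, ?_, ?_⟩
      · intro z hz
        simp only [Finset.mem_insert, Finset.mem_singleton] at hz
        rw [Finset.mem_sdiff]
        rcases hz with rfl | rfl
        · refine ⟨hOmem, ?_⟩
          simp only [Finset.mem_insert, Finset.mem_singleton]
          push_neg
          exact ⟨fun h => vtx_ne_zero a h.symm, fun h => vtx_ne_zero b h.symm⟩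
        · refine ⟨hVmem k0, ?_⟩
          simp only [Finset.mem_insert, Finset.mem_singleton]
          push_neg
          exact ⟨fun h => hk0a (vtx_inj h), fun h => hk0b (vtx_inj h)⟩
      · rw [Finset.card_insert_of_notMem (by simpa using hOne), Finset.card_singleton]
      · exact (pred_pair hOne).2 (diam_sep hodd a b k0 hab hk0)
      · rw [Finset.image_insert, Finset.image_singleton, hRO, hfixk0]
  rw [hset, Finset.card_singleton]

end NG
end

noncomputable section
namespace NG
open Real Finset
open scoped Classical

variable {n : ℕ} [NeZero n]

lemma chordB_sep_iff (hodd : Odd n) (a k k' : Fin n) (hka : k ≠ a)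
    (hk' : (n:ℤ) ∣ ((k':ℤ) - (2*(a:ℤ) - (k:ℤ)))) :
    (SepLine (vtx n k) (vtx n k') (vtx n a) ((0:ℝ),(0:ℝ))
      ↔ 0 < Real.cos (2*π*((((a:ℤ)-(k:ℤ)) : ℤ) : ℝ)/n)) := by
  have hn : 0 < n := npos
  set d : ℤ := (a:ℤ) - (k:ℤ) with hd
  obtain ⟨e, he⟩ := hk'
  have hSd : S n d ≠ 0 := by
    apply S_ne_zero hn
    intro h
    exact hka (fin_eq_of_dvd (by
      obtain ⟨u, hu⟩ := h
      exact ⟨-u, by rw [hd] at hu; linarith [hu]⟩))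
  have hS2d : S n (2*d) ≠ 0 := by
    apply S_ne_zero hn
    intro h
    have h2 := odd_dvd_half hodd h
    apply hka
    apply fin_eq_of_dvd
    obtain ⟨u, hu⟩ := h2
    exact ⟨-u, by rw [hd] at hu; linarith [hu]⟩
  have hd1 : det2 (vtx n k' - vtx n k) (vtx n a - vtx n k)
      = 4 * S n ((k':ℤ) - (k:ℤ)) * S n ((a:ℤ) - (k':ℤ)) * S n ((a:ℤ) - (k:ℤ)) := by
    rw [vtx_pt, vtx_pt, vtx_pt]
    exact det2_ptz _ _ _ hn
  have hd2 : det2 (vtx n k' - vtx n k) (((0:ℝ),(0:ℝ)) - vtx n k)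
      = S n (2*((k':ℤ) - (k:ℤ))) := by
    rw [vtx_pt, vtx_pt]
    exact det2_ptz_zero _ _ hn
  have hS1 : S n ((k':ℤ) - (k:ℤ)) = (-1)^e * S n (2*d) := by
    rw [show (k':ℤ) - (k:ℤ) = 2*d + (n:ℤ)*e by rw [hd]; linarith [he]]
    exact S_add_int_mul hn _ _
  have hS2 : S n ((a:ℤ) - (k':ℤ)) = (-1)^(-e) * (- S n d) := by
    rw [show (a:ℤ) - (k':ℤ) = (-d) + (n:ℤ)*(-e) by rw [hd]; linarith [he],
      S_add_int_mul hn _ _, S_neg]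
  have hS3 : S n (2*((k':ℤ) - (k:ℤ))) = 2 * S n (2*d) * Real.cos (2*π*(d:ℝ)/n) := by
    rw [show 2*((k':ℤ) - (k:ℤ)) = (2*(2*d)) + (n:ℤ)*(2*e) by rw [hd]; linarith [he],
      S_add_int_mul hn _ _, Even.neg_one_zpow ⟨e, by ring⟩, one_mul, S_two_mul]
    have : (π * (((2*d : ℤ)) : ℝ) / n) = 2*π*(d:ℝ)/n := by push_cast; ring
    rw [this]
  have hee : ((-1:ℝ)^e) * ((-1:ℝ)^(-e)) = 1 := by
    rw [← zpow_add₀ (by norm_num : (-1:ℝ) ≠ 0)]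
    simp
  have hprod : det2 (vtx n k' - vtx n k) (vtx n a - vtx n k)
      * det2 (vtx n k' - vtx n k) (((0:ℝ),(0:ℝ)) - vtx n k)
      = -8 * (S n (2*d))^2 * (S n d)^2 * Real.cos (2*π*(d:ℝ)/n) := by
    rw [hd1, hd2, hS1, hS2, hS3, ← hd]
    linear_combination (-8 * (S n (2*d))^2 * (S n d)^2 * Real.cos (2*π*(d:ℝ)/n)) * hee
  have h1 : 0 < (S n (2*d))^2 := lt_of_le_of_ne (sq_nonneg _) (Ne.symm (pow_ne_zero 2 hS2d))
  have h2 : 0 < (S n d)^2 := lt_of_le_of_ne (sq_nonneg _) (Ne.symm (pow_ne_zero 2 hSd))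
  unfold SepLine
  rw [hprod]
  constructor
  · intro h
    by_contra hc
    push_neg at hc
    nlinarith [h, h1, h2, mul_nonneg (mul_pos h1 h2).le (neg_nonneg.mpr hc)]
  · intro h
    nlinarith [mul_pos (mul_pos h1 h2) h]

end NG
end

noncomputable section
namespace NG
open Real Finset
open scoped Classical

variable {n : ℕ} [NeZero n]

lemma cos_period_int (z : ℤ) :
    Real.cos (2*π*((z % (n:ℤ) : ℤ):ℝ)/n) = Real.cos (2*π*((z:ℤ):ℝ)/n) := by
  have hn : 0 < n := npos
  have hnR : (n:ℝ) ≠ 0 := Nat.cast_ne_zero.mpr hn.ne'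
  have h0 : (z % (n:ℤ)) + (n:ℤ) * (z / (n:ℤ)) = z := by rw [Int.emod_def]; ring
  have h0R : ((z % (n:ℤ) : ℤ):ℝ) + (n:ℝ) * ((z / (n:ℤ) : ℤ):ℝ) = (z:ℝ) := by
    exact_mod_cast congrArg (Int.cast : ℤ → ℝ) h0
  have hz : (2*π*((z:ℤ):ℝ)/n) = 2*π*((z % (n:ℤ) : ℤ):ℝ)/n
      + ((z / (n:ℤ) : ℤ):ℝ) * (2*π) := by
    rw [← h0R]
    field_simp
  rw [hz]
  exact (Real.cos_add_int_mul_two_pi _ _).symm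

lemma cos_reflect (t : ℤ) :
    Real.cos (2*π*(((n:ℤ) - t : ℤ):ℝ)/n) = Real.cos (2*π*((t:ℤ):ℝ)/n) := by
  have hn : 0 < n := npos
  have hnR : (n:ℝ) ≠ 0 := Nat.cast_ne_zero.mpr hn.ne'
  have hz : (2*π*(((n:ℤ) - t : ℤ):ℝ)/n) = -(2*π*((t:ℤ):ℝ)/n) + ((1:ℤ):ℝ) * (2*π) := by
    push_cast
    field_simp
    ring
  rw [hz, Real.cos_add_int_mul_two_pi, Real.cos_neg]

lemma cos_pos_small {t : ℤ} (ht0 : 0 ≤ t) (ht : 4*t < n) :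
    0 < Real.cos (2*π*((t:ℤ):ℝ)/n) := by
  have hn : 0 < n := npos
  have hnR : (0:ℝ) < (n:ℝ) := by exact_mod_cast hn
  have hπ : (0:ℝ) < π := Real.pi_pos
  have htR : (0:ℝ) ≤ (t:ℝ) := by exact_mod_cast ht0
  apply Real.cos_pos_of_mem_Ioo
  constructor
  · have : (0:ℝ) ≤ 2*π*((t:ℤ):ℝ)/n := by positivity
    linarith [this, Real.pi_div_two_pos]
  · rw [div_lt_iff₀ hnR]
    have h4 : (4:ℝ) * (t:ℝ) < (n:ℝ) := by exact_mod_cast ht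
    nlinarith [h4, hπ]

lemma cos_nonpos_mid {t : ℤ} (ht1 : (n:ℤ) ≤ 4*t) (ht2 : 2*t < (n:ℤ)) :
    Real.cos (2*π*((t:ℤ):ℝ)/n) ≤ 0 := by
  have hn : 0 < n := npos
  have hnR : (0:ℝ) < (n:ℝ) := by exact_mod_cast hn
  have hπ : (0:ℝ) < π := Real.pi_pos
  apply Real.cos_nonpos_of_pi_div_two_le_of_le
  · rw [le_div_iff₀ hnR]
    have h4 : (n:ℝ) ≤ 4 * (t:ℝ) := by exact_mod_cast ht1
    nlinarith [h4, hπ]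
  · rw [div_le_iff₀ hnR]
    have h2 : 2 * (t:ℝ) < (n:ℝ) := by exact_mod_cast ht2
    nlinarith [h2, hπ]

lemma nsepB (hodd : Odd n) (a : Fin n) :
    nsep (ngonWithCenter n) (vtx n a) ((0:ℝ),(0:ℝ)) % 2 = (n / 4) % 2 := by
  have hn : 0 < n := npos
  have hn2 : n % 2 = 1 := Nat.odd_iff.mp hodd
  set w : ℤ := 2*(a:ℤ) with hw
  set c : ℝ := 2*π*(w:ℝ)/n with hc
  have hRv : ∀ k : Fin n, Rfl c (vtx n k) = vtx n (finOf n (w - (k:ℤ))) :=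
    fun k => Rfl_vtx w k
  have hRP : Rfl c (vtx n a) = vtx n a := by
    rw [hRv a]
    congr 1
    exact finOf_eq_of_dvd ⟨0, by rw [hw]; ring⟩
  have hRO : Rfl c ((0:ℝ),(0:ℝ)) = ((0:ℝ),(0:ℝ)) := Rfl_zero c
  have hOmem : ((0:ℝ),(0:ℝ)) ∈ ngonWithCenter n := mem_ngon.2 (Or.inl rfl)
  have hVmem : ∀ k : Fin n, vtx n k ∈ ngonWithCenter n :=
    fun k => mem_ngon.2 (Or.inr ⟨k, rfl⟩)
  have hC : ∀ x ∈ ngonWithCenter n \ {vtx n a, ((0:ℝ),(0:ℝ))},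
      Rfl c x ∈ ngonWithCenter n \ {vtx n a, ((0:ℝ),(0:ℝ))} := by
    intro x hx
    rw [Finset.mem_sdiff] at hx ⊢
    obtain ⟨hxC, hxPQ⟩ := hx
    rcases mem_ngon.1 hxC with rfl | ⟨k, rfl⟩
    · rw [hRO]; exact ⟨hxC, hxPQ⟩
    · rw [hRv k]
      simp only [Finset.mem_insert, Finset.mem_singleton] at hxPQ ⊢
      push_neg at hxPQ ⊢
      refine ⟨hVmem _, ?_, vtx_ne_zero _⟩
      intro h
      apply hxPQ.1
      have h2 := vtx_inj h
      have hd2 := dvd_of_finOf_eq h2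
      congr 1
      apply fin_eq_of_dvd
      obtain ⟨u, hu⟩ := hd2
      exact ⟨-u, by rw [hw] at hu; linarith [hu]⟩
  have hpar := nsep_parity (ngonWithCenter n) (vtx n a) ((0:ℝ),(0:ℝ)) c hC
    (Or.inl ⟨hRP, hRO⟩)
  rw [hpar]
  have hset : ((((ngonWithCenter n) \ {vtx n a, ((0:ℝ),(0:ℝ))}).powersetCard 2).filter
      (fun s => (∃ A ∈ s, ∃ B ∈ s, A ≠ B ∧ SepLine A B (vtx n a) ((0:ℝ),(0:ℝ))) ∧
        s.image (Rfl c) = s))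
      = (Finset.Icc 1 (n/4)).image
          (fun t : ℕ => ({vtx n (finOf n ((a:ℤ) + (t:ℤ))),
            vtx n (finOf n ((a:ℤ) - (t:ℤ)))} : Finset (ℝ × ℝ))) := by
    ext s
    rw [Finset.mem_filter, Finset.mem_powersetCard, Finset.mem_image]
    constructor
    · rintro ⟨⟨hsub, hcard⟩, hpred, hfix⟩
      obtain ⟨x, y, hxy, rfl⟩ := Finset.card_eq_two.1 hcard
      have hsep : SepLine x y (vtx n a) ((0:ℝ),(0:ℝ)) := (pred_pair hxy).1 hpred
      have hxD := hsub (Finset.mem_insert_self x {y})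
      rw [Finset.mem_sdiff] at hxD
      have hσx : Rfl c x ∈ ({x, y} : Finset (ℝ × ℝ)) := by
        have h := Finset.mem_image_of_mem (Rfl c)
          (show x ∈ ({x, y} : Finset (ℝ × ℝ)) by simp)
        rwa [hfix] at h
      have hxne : x ≠ ((0:ℝ),(0:ℝ)) := by
        intro h
        have := hxD.2
        simp [h] at this
      obtain ⟨k, rfl⟩ : ∃ k, x = vtx n k := by
        rcases mem_ngon.1 hxD.1 with h | ⟨k, hk⟩
        · exact absurd h hxne
        · exact ⟨k, hk⟩
      have hka : k ≠ a := by
        intro h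
        have := hxD.2
        simp [h] at this
      have hσxx : Rfl c (vtx n k) ≠ vtx n k := by
        rw [hRv k]
        intro h
        have h2 := vtx_inj h
        have hd2 := dvd_of_finOf_eq h2
        apply hka
        apply fin_eq_of_dvd
        apply odd_dvd_half hodd
        obtain ⟨u, hu⟩ := hd2
        exact ⟨-u, by rw [hw] at hu; linarith [hu]⟩
      have hσxy : Rfl c (vtx n k) = y := by
        simp only [Finset.mem_insert, Finset.mem_singleton] at hσx
        tauto
      set k' : Fin n := finOf n (w - (k:ℤ)) with hk'def
      have hyk' : y = vtx n k' := by rw [← hσxy, hRv k]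
      have hkk' : (n:ℤ) ∣ ((k':ℤ) - (2*(a:ℤ) - (k:ℤ))) := by
        have hd := dvd_of_finOf_eq hk'def.symm
        obtain ⟨u, hu⟩ := hd
        exact ⟨-u, by rw [hw] at hu; linarith [hu]⟩
      rw [hyk'] at hsep
      have hcos := (chordB_sep_iff hodd a k k' hka hkk').1 hsep
      obtain ⟨d, hd⟩ : ∃ d : ℤ, d = (a:ℤ) - (k:ℤ) := ⟨_, rfl⟩
      rw [← hd] at hcos
      have hnd : ¬ (n:ℤ) ∣ d := by
        intro h
        apply hka
        apply fin_eq_of_dvd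
        obtain ⟨u, hu⟩ := h
        exact ⟨-u, by rw [hd] at hu; linarith [hu]⟩
      obtain ⟨t0, ht0⟩ : ∃ t0 : ℤ, t0 = d % (n:ℤ) := ⟨_, rfl⟩
      obtain ⟨v, hv⟩ := dvd_sub_emod (n := n) d
      rw [← ht0] at hv
      have ht0pos : 0 < t0 := by
        rcases lt_or_eq_of_le (Int.emod_nonneg d (by exact_mod_cast hn.ne' :
          (n:ℤ) ≠ 0)) with h | h
        · omega
        · exact absurd (Int.dvd_of_emod_eq_zero h.symm) hnd
      have ht0lt : t0 < n := by
        have := Int.emod_lt_of_pos d (by exact_mod_cast hn : (0:ℤ) < n)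
        omega
      have hcos0 : 0 < Real.cos (2*π*((t0:ℤ):ℝ)/n) := by
        rw [ht0, cos_period_int]
        exact hcos
      obtain ⟨t, ht⟩ : ∃ t : ℤ, t = min t0 ((n:ℤ) - t0) := ⟨_, rfl⟩
      have ht1 : 1 ≤ t := by omega
      have ht2' : 2*t < (n:ℤ) := by omega
      have hcost : 0 < Real.cos (2*π*((t:ℤ):ℝ)/n) := by
        rcases min_cases t0 ((n:ℤ) - t0) with ⟨heq, _⟩ | ⟨heq, _⟩
        · rw [ht, heq]; exact hcos0
        · rw [ht, heq, cos_reflect]; exact hcos0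
      have ht4 : 4*t < (n:ℤ) := by
        by_contra hcon
        push_neg at hcon
        exact absurd (cos_nonpos_mid hcon ht2') (not_le.mpr hcost)
      refine ⟨t.toNat, ?_, ?_⟩
      · rw [Finset.mem_Icc]
        omega
      · have htoNat : ((t.toNat : ℕ) : ℤ) = t := Int.toNat_of_nonneg (by omega)
        simp only [htoNat]
        obtain ⟨u, hu⟩ := hkk'
        rcases min_cases t0 ((n:ℤ) - t0) with ⟨heq, _⟩ | ⟨heq, _⟩
        · rw [heq] at ht
          have e1 : finOf n ((a:ℤ) + t) = k' := by
            apply finOf_eq_of_dvd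
            exact ⟨-u - v, by linarith [hu, hv, hd, ht]⟩
          have e2 : finOf n ((a:ℤ) - t) = k := by
            apply finOf_eq_of_dvd
            exact ⟨v, by linarith [hv, hd, ht]⟩
          rw [e1, e2, hyk']
          exact Finset.pair_comm _ _
        · rw [heq] at ht
          have e1 : finOf n ((a:ℤ) + t) = k := by
            apply finOf_eq_of_dvd
            exact ⟨v + 1, by linarith [hv, hd, ht]⟩
          have e2 : finOf n ((a:ℤ) - t) = k' := by
            apply finOf_eq_of_dvd
            exact ⟨-u - v - 1, by linarith [hu, hv, hd, ht]⟩
          rw [e1, e2, hyk']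
    · rintro ⟨t, hmem, rfl⟩
      rw [Finset.mem_Icc] at hmem
      have ht4 : 4*t < n := by omega
      set ka : Fin n := finOf n ((a:ℤ) + (t:ℤ)) with hka
      set kb : Fin n := finOf n ((a:ℤ) - (t:ℤ)) with hkb
      have hdka := dvd_of_finOf_eq hka.symm
      have hdkb := dvd_of_finOf_eq hkb.symm
      obtain ⟨u, hu⟩ := hdka
      obtain ⟨v, hv⟩ := hdkb
      have hkakb : ka ≠ kb := by
        intro h
        have h2t : (n:ℤ) ∣ 2*(t:ℤ) := ⟨u - v, by rw [h] at hu; linarith [hu, hv]⟩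
        have h0 : (2*(t:ℤ)) = 0 := Int.eq_zero_of_abs_lt_dvd h2t (by rw [abs_lt]; omega)
        omega
      have hkaa : ka ≠ a := by
        intro h
        have hdvd : (n:ℤ) ∣ (t:ℤ) := ⟨u, by rw [h] at hu; linarith [hu]⟩
        have h0 : ((t:ℕ):ℤ) = 0 := Int.eq_zero_of_abs_lt_dvd hdvd (by rw [abs_lt]; omega)
        omega
      have hkba : kb ≠ a := by
        intro h
        have hdvd : (n:ℤ) ∣ (t:ℤ) := ⟨-v, by rw [h] at hv; linarith [hv]⟩
        have h0 : ((t:ℕ):ℤ) = 0 := Int.eq_zero_of_abs_lt_dvd hdvd (by rw [abs_lt]; omega)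
        omega
      have hvne : vtx n ka ≠ vtx n kb := fun h => hkakb (vtx_inj h)
      refine ⟨⟨?_, ?_⟩, ?_, ?_⟩
      · intro z hz
        simp only [Finset.mem_insert, Finset.mem_singleton] at hz
        rw [Finset.mem_sdiff]
        rcases hz with rfl | rfl
        · refine ⟨hVmem _, ?_⟩
          simp only [Finset.mem_insert, Finset.mem_singleton]
          push_neg
          exact ⟨fun h => hkaa (vtx_inj h), vtx_ne_zero _⟩
        · refine ⟨hVmem _, ?_⟩
          simp only [Finset.mem_insert, Finset.mem_singleton]
          push_neg
          exact ⟨fun h => hkba (vtx_inj h), vtx_ne_zero _⟩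
      · rw [Finset.card_insert_of_notMem (by simpa using hvne), Finset.card_singleton]
      · apply (pred_pair hvne).2
        have hsep : (n:ℤ) ∣ ((kb:ℤ) - (2*(a:ℤ) - (ka:ℤ))) := by
          exact ⟨-u - v, by linarith [hu, hv]⟩
        rw [chordB_sep_iff hodd a ka kb hkaa hsep]
        have hcong : ((a:ℤ) - (ka:ℤ)) % (n:ℤ) = ((n:ℤ) - (t:ℤ)) % (n:ℤ) := by
          apply Int.ModEq.symm
          apply Int.modEq_iff_dvd.mpr
          exact ⟨u - 1, by linarith [hu]⟩
        rw [← cos_period_int ((a:ℤ) - (ka:ℤ)), hcong, cos_period_int, cos_reflect]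
        exact cos_pos_small (by omega) (by exact_mod_cast ht4)
      · rw [Finset.image_insert, Finset.image_singleton, hRv, hRv]
        have e1 : finOf n (w - (ka:ℤ)) = kb := by
          apply finOf_eq_of_dvd
          exact ⟨u + v, by rw [hw]; linarith [hu, hv]⟩
        have e2 : finOf n (w - (kb:ℤ)) = ka := by
          apply finOf_eq_of_dvd
          exact ⟨u + v, by rw [hw]; linarith [hu, hv]⟩
        rw [e1, e2]
        exact Finset.pair_comm _ _
  rw [hset]
  have hinj : Set.InjOn (fun t : ℕ => ({vtx n (finOf n ((a:ℤ) + (t:ℤ))),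
      vtx n (finOf n ((a:ℤ) - (t:ℤ)))} : Finset (ℝ × ℝ))) (Finset.Icc 1 (n/4)) := by
    intro t1 h1 t2 h2 heq
    rw [Finset.mem_coe, Finset.mem_Icc] at h1 h2
    have heq' : ({vtx n (finOf n ((a:ℤ) + (t1:ℤ))), vtx n (finOf n ((a:ℤ) - (t1:ℤ)))} :
        Finset (ℝ × ℝ)) = {vtx n (finOf n ((a:ℤ) + (t2:ℤ))), vtx n (finOf n ((a:ℤ) - (t2:ℤ)))} :=
      heq
    have hmem1 : vtx n (finOf n ((a:ℤ) + (t1:ℤ))) ∈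
        ({vtx n (finOf n ((a:ℤ) + (t2:ℤ))), vtx n (finOf n ((a:ℤ) - (t2:ℤ)))} :
          Finset (ℝ × ℝ)) := by
      rw [← heq']
      simp
    simp only [Finset.mem_insert, Finset.mem_singleton] at hmem1
    rcases hmem1 with h | h
    · have h3 := vtx_inj h
      obtain ⟨p, hp⟩ := dvd_of_finOf_eq h3
      obtain ⟨q, hq⟩ := dvd_of_finOf_eq (rfl : finOf n ((a:ℤ) + (t2:ℤ)) = _)
      have hdvd : (n:ℤ) ∣ ((t1:ℤ) - (t2:ℤ)) := ⟨p - q, by linarith [hp, hq]⟩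
      have h0 : ((t1:ℤ) - (t2:ℤ)) = 0 := Int.eq_zero_of_abs_lt_dvd hdvd
        (by rw [abs_lt]; constructor <;> omega)
      omega
    · have h3 := vtx_inj h
      obtain ⟨p, hp⟩ := dvd_of_finOf_eq h3
      obtain ⟨q, hq⟩ := dvd_of_finOf_eq (rfl : finOf n ((a:ℤ) - (t2:ℤ)) = _)
      have hdvd : (n:ℤ) ∣ ((t1:ℤ) + (t2:ℤ)) := ⟨p - q, by linarith [hp, hq]⟩
      have h0 : ((t1:ℤ) + (t2:ℤ)) = 0 := Int.eq_zero_of_abs_lt_dvd hdvd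
        (by rw [abs_lt]; constructor <;> omega)
      omega
  rw [Finset.card_image_of_injOn hinj, Nat.card_Icc]
  omega

end NG
end

open NG

/-- For odd `n ≥ 5` with `n ≡ 5, 7 (mod 8)` (equivalently `n+1 ≡ 0, 6 (mod 8)`),
the regular `n`-gon together with its barycenter is monochromatic; for
`n ≡ 1, 3 (mod 8)` the Orchard partition is `(n,1)`: the vertices form one class
and the barycenter the other. -/
theorem ngon_with_center_orchard (n : ℕ) [NeZero n] (hn : 5 ≤ n) (hodd : Odd n) :
    ((n % 8 = 5 ∨ n % 8 = 7) → Mono (ngonWithCenter n)) ∧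
    ((n % 8 = 1 ∨ n % 8 = 3) →
      (∀ a b : Fin n, vtx n a ≠ vtx n b →
        Orchard (ngonWithCenter n) (vtx n a) (vtx n b)) ∧
      (∀ a : Fin n, ¬ Orchard (ngonWithCenter n) (vtx n a) (0, 0))) := by
  have hn2 : n % 2 = 1 := Nat.odd_iff.mp hodd
  have hcard := NG.card_ngon (n := n)
  have horA : ∀ a b : Fin n, a ≠ b →
      Orchard (ngonWithCenter n) (vtx n a) (vtx n b) := by
    intro a b hab
    have h1 := NG.nsepA hodd hab
    show (↑(nsep (ngonWithCenter n) (vtx n a) (vtx n b)) : ℤ) % 2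
      = ((↑(ngonWithCenter n).card : ℤ) - 3) % 2
    rw [hcard]
    omega
  have hB : ∀ a : Fin n,
      nsep (ngonWithCenter n) (vtx n a) ((0:ℝ),(0:ℝ)) % 2 = (n / 4) % 2 :=
    fun a => NG.nsepB hodd a
  constructor
  · intro h8
    have h4 : (n / 4) % 2 = 1 := by omega
    intro P hP Q hQ hPQ
    rcases NG.mem_ngon.1 hP with rfl | ⟨a, rfl⟩ <;>
      rcases NG.mem_ngon.1 hQ with h | ⟨b, rfl⟩
    · exact absurd h.symm hPQ
    · -- P = O, Q = vtx b
      show (↑(nsep (ngonWithCenter n) ((0:ℝ),(0:ℝ)) (vtx n b)) : ℤ) % 2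
        = ((↑(ngonWithCenter n).card : ℤ) - 3) % 2
      rw [NG.nsep_comm, hcard]
      have := hB b
      omega
    · -- P = vtx a, Q = O
      subst h
      show (↑(nsep (ngonWithCenter n) (vtx n a) ((0:ℝ),(0:ℝ))) : ℤ) % 2
        = ((↑(ngonWithCenter n).card : ℤ) - 3) % 2
      rw [hcard]
      have := hB a
      omega
    · exact horA a b (fun h => hPQ (congrArg (vtx n) h))
  · intro h8
    have h4 : (n / 4) % 2 = 0 := by omega
    constructor
    · intro a b hab
      exact horA a b (fun h => hab (congrArg (vtx n) h))
    · intro a hor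
      have h1 : (↑(nsep (ngonWithCenter n) (vtx n a) ((0:ℝ),(0:ℝ))) : ℤ) % 2
          = ((↑(ngonWithCenter n).card : ℤ) - 3) % 2 := hor
      rw [hcard] at h1
      have := hB a
      omega
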